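/- Let λ > 0, let (β_n)_{n≥0} satisfy 0 < β_n ≤ 1 for all n, and for n ≥ 0 let q(n,t) = (−1)^n ∑_{k=n}^∞ (−λ)^k ∑_{(k_0,…,k_n) ∈ Ω^k_n} t^{∑_{j=0}^n k_j β_j} / Γ(1 + ∑_{j=0}^n k_j β_j). Then for every s > 0 such that s^{β_k} > λ for all 0 ≤ k ≤ n, the Laplace transform of q(n,·) satisfies ∫₀^∞ q(n,t) e^{−st} dt = λ^n s^{β_n − 1} / ∏_{k=0}^n (s^{β_k} + λ). -/

import Mathlib

open scoped BigOperators

/-- Riemann–Liouville fractional integral of order `α`. -/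
noncomputable def rlInt (α : ℝ) (f : ℝ → ℝ) (t : ℝ) : ℝ :=
  (1 / Real.Gamma α) * ∫ s in (0:ℝ)..t, (t - s) ^ (α - 1) * f s

/-- `Theta n k` is the set of tuples `(k_0, …, k_n)` of nonnegative integers with
`k_0 + ⋯ + k_n = k` and `k_j ≥ 1` for `1 ≤ j ≤ n`. -/
def Theta (n k : ℕ) : Finset (Fin (n + 1) → ℕ) :=
  (Finset.Nat.antidiagonalTuple (n + 1) k).filter
    (fun κ => ∀ j : Fin (n + 1), 1 ≤ j.val → 1 ≤ κ j)

/-- The state probabilities of SDTFPP-I (note that `Theta n k = ∅` for `k < n`,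
so the series over all `k : ℕ` agrees with the series starting at `k = n`). -/
noncomputable def pI (lam : ℝ) (α : ℕ → ℝ) (n : ℕ) (t : ℝ) : ℝ :=
  (-1 : ℝ) ^ n * ∑' k : ℕ, (-lam) ^ k *
    ∑ κ ∈ Theta n k,
      t ^ (∑ j, (κ j : ℝ) * α j.val) / Real.Gamma (1 + ∑ j, (κ j : ℝ) * α j.val)
/-- `Omega n k` is the set of tuples `(k_0, …, k_n)` of nonnegative integers with
`k_0 + ⋯ + k_n = k` and `k_j ≥ 1` for `0 ≤ j ≤ n - 1` (`k_n` may be `0`). -/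
def Omega (n k : ℕ) : Finset (Fin (n + 1) → ℕ) :=
  (Finset.Nat.antidiagonalTuple (n + 1) k).filter
    (fun κ => ∀ j : Fin (n + 1), j.val < n → 1 ≤ κ j)

/-- The state probabilities of SDTFPP-II (note that `Omega n k = ∅` for `k < n`,
so the series over all `k : ℕ` agrees with the series starting at `k = n`). -/
noncomputable def qII (lam : ℝ) (β : ℕ → ℝ) (n : ℕ) (t : ℝ) : ℝ :=
  (-1 : ℝ) ^ n * ∑' k : ℕ, (-lam) ^ k *
    ∑ κ ∈ Omega n k,
      t ^ (∑ j, (κ j : ℝ) * β j.val) / Real.Gamma (1 + ∑ j, (κ j : ℝ) * β j.val)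

open MeasureTheory Set

/- ### Auxiliary lemmas -/

lemma aux_pi_geom : ∀ (N : ℕ) (y : Fin N → ℝ), (∀ j, |y j| < 1) →
    Summable (fun m : Fin N → ℕ => ∏ j, y j ^ m j) ∧
    ∑' m : Fin N → ℕ, ∏ j, y j ^ m j = ∏ j, (1 - y j)⁻¹ := by
  intro N
  induction N with
  | zero =>
    intro y hy
    haveI : Unique (Fin 0 → ℕ) := ⟨⟨fun i => i.elim0⟩, fun f => funext fun i => i.elim0⟩
    constructor
    · exact (hasSum_single (f := fun m : Fin 0 → ℕ => ∏ j, y j ^ m j) default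
        (fun b hb => absurd (Subsingleton.elim b default) hb)).summable
    · rw [tsum_eq_single default (fun b hb => absurd (Subsingleton.elim b default) hb)]
      simp
  | succ N ih =>
    intro y hy
    have key : ∀ p : ℕ × (Fin N → ℕ),
        (∏ j, y j ^ (Fin.consEquiv (fun _ => ℕ) p) j)
          = y 0 ^ p.1 * ∏ j : Fin N, y j.succ ^ p.2 j := by
      intro p
      rw [Fin.prod_univ_succ]
      simp [Fin.consEquiv]
    have hfun : (fun p : ℕ × (Fin N → ℕ) => ∏ j, y j ^ (Fin.consEquiv (fun _ => ℕ) p) j)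
        = (fun p : ℕ × (Fin N → ℕ) => y 0 ^ p.1 * ∏ j : Fin N, y j.succ ^ p.2 j) :=
      funext key
    have ihabs := ih (fun j => |y j.succ|) (fun j => by
      simpa [abs_abs] using hy j.succ)
    have ihval := ih (fun j => y j.succ) (fun j => hy j.succ)
    have habs := Summable.mul_of_nonneg (f := fun a : ℕ => |y 0| ^ a)
      (g := fun m : Fin N → ℕ => ∏ j : Fin N, |y j.succ| ^ m j)
      (summable_geometric_of_abs_lt_one (by simpa [abs_abs] using hy 0))
      ihabs.1 (fun a => by positivity) (fun m => by positivity)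
    have hsum2 : Summable (fun p : ℕ × (Fin N → ℕ) =>
        y 0 ^ p.1 * ∏ j : Fin N, y j.succ ^ p.2 j) := by
      apply Summable.of_norm
      apply habs.congr
      intro p
      rw [Real.norm_eq_abs, abs_mul, abs_pow, Finset.abs_prod]
      simp [abs_pow]
    have hsum2' : Summable (fun p : ℕ × (Fin N → ℕ) =>
        ∏ j, y j ^ (Fin.consEquiv (fun _ => ℕ) p) j) := by
      rw [hfun]; exact hsum2
    have hsum : Summable (fun m : Fin (N+1) → ℕ => ∏ j, y j ^ m j) :=
      ((Fin.consEquiv (fun _ => ℕ)).summable_iff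
        (f := fun m : Fin (N+1) → ℕ => ∏ j, y j ^ m j)).mp hsum2'
    refine ⟨hsum, ?_⟩
    rw [← (Fin.consEquiv (fun _ => ℕ)).tsum_eq (f := fun m : Fin (N+1) → ℕ => ∏ j, y j ^ m j)]
    have h1 : ∑' p : ℕ × (Fin N → ℕ), ∏ j, y j ^ (Fin.consEquiv (fun _ => ℕ) p) j
        = ∑' p : ℕ × (Fin N → ℕ), y 0 ^ p.1 * ∏ j : Fin N, y j.succ ^ p.2 j := by
      rw [hfun]
    rw [h1, hsum2.tsum_prod]
    calc ∑' (a : ℕ) (m : Fin N → ℕ), y 0 ^ a * ∏ j : Fin N, y j.succ ^ m j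
        = ∑' (a : ℕ), y 0 ^ a * ∑' (m : Fin N → ℕ), ∏ j : Fin N, y j.succ ^ m j := by
          congr 1; funext a; rw [← tsum_mul_left]
      _ = (1 - y 0)⁻¹ * ∏ j : Fin N, (1 - y j.succ)⁻¹ := by
          rw [tsum_mul_right, tsum_geometric_of_abs_lt_one (hy 0), ihval.2]
      _ = ∏ j, (1 - y j)⁻¹ := by rw [Fin.prod_univ_succ]

lemma mem_Omega {n k : ℕ} {κ : Fin (n+1) → ℕ} :
    κ ∈ Omega n k ↔ (∑ j, κ j = k) ∧ ∀ j : Fin (n + 1), j.val < n → 1 ≤ κ j := by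
  simp [Omega, Finset.Nat.mem_antidiagonalTuple]

/-- The padding tuple: `1` in the first `n` coordinates, `0` in the last one. -/
def omegaPad (n : ℕ) : Fin (n+1) → ℕ := fun j => if j.val < n then 1 else 0

/-- Tuples `Fin (n+1) → ℕ` are in bijection with `Σ k, Omega n k`, by adding the padding. -/
def omegaEquiv (n : ℕ) : (Fin (n+1) → ℕ) ≃ (Σ k, {κ // κ ∈ Omega n k}) where
  toFun m := ⟨∑ j, (m j + omegaPad n j), ⟨fun j => m j + omegaPad n j,
    mem_Omega.mpr ⟨rfl, fun j hj => by simp [omegaPad, hj]⟩⟩⟩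
  invFun p := fun j => p.2.1 j - omegaPad n j
  left_inv m := by funext j; simp
  right_inv p := by
    obtain ⟨k, κ, hκ⟩ := p
    obtain ⟨hsum, hge⟩ := mem_Omega.mp hκ
    have hval : ∀ j, κ j - omegaPad n j + omegaPad n j = κ j := by
      intro j
      by_cases hj : j.val < n
      · have := hge j hj
        simp only [omegaPad, if_pos hj]
        omega
      · simp [omegaPad, hj]
    refine Sigma.subtype_ext ?_ ?_
    · simp only [hval, hsum]
    · funext j; exact hval j

lemma omega_series (n : ℕ) (x : Fin (n+1) → ℝ) (hx : ∀ j, |x j| < 1) :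
    Summable (fun k : ℕ => ∑ κ ∈ Omega n k, ∏ j, x j ^ κ j) ∧
    ∑' k : ℕ, ∑ κ ∈ Omega n k, ∏ j, x j ^ κ j
      = (∏ j, x j ^ omegaPad n j) * ∏ j, (1 - x j)⁻¹ := by
  classical
  set F : (Σ k, {κ // κ ∈ Omega n k}) → ℝ := fun p => ∏ j, x j ^ (p.2.1 j) with hF
  have hcomp : ∀ m : Fin (n+1) → ℕ, F (omegaEquiv n m)
      = (∏ j, x j ^ omegaPad n j) * ∏ j, x j ^ m j := by
    intro m
    simp only [F, omegaEquiv, Equiv.coe_fn_mk]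
    rw [← Finset.prod_mul_distrib]
    exact Finset.prod_congr rfl fun j _ => by rw [← pow_add, add_comm (m j)]
  have hD := aux_pi_geom (n+1) x hx
  have hFe : Summable (fun m : Fin (n+1) → ℕ => F (omegaEquiv n m)) := by
    have : Summable (fun m : Fin (n+1) → ℕ =>
        (∏ j, x j ^ omegaPad n j) * ∏ j, x j ^ m j) := hD.1.mul_left _
    exact this.congr fun m => (hcomp m).symm
  have hFsum : Summable F := ((omegaEquiv n).summable_iff (f := F)).mp hFe
  have hsub : ∀ k : ℕ, ∑' κ : {κ // κ ∈ Omega n k}, F ⟨k, κ⟩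
      = ∑ κ ∈ Omega n k, ∏ j, x j ^ κ j := by
    intro k
    exact Finset.tsum_subtype (Omega n k) (fun κ => ∏ j, x j ^ κ j)
  constructor
  · exact (hFsum.sigma).congr fun k => hsub k
  · calc ∑' k : ℕ, ∑ κ ∈ Omega n k, ∏ j, x j ^ κ j
        = ∑' k : ℕ, ∑' κ : {κ // κ ∈ Omega n k}, F ⟨k, κ⟩ :=
          tsum_congr fun k => (hsub k).symm
      _ = ∑' p, F p := (hFsum.tsum_sigma).symm
      _ = ∑' m : Fin (n+1) → ℕ, F (omegaEquiv n m) := ((omegaEquiv n).tsum_eq F).symm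
      _ = ∑' m : Fin (n+1) → ℕ, (∏ j, x j ^ omegaPad n j) * ∏ j, x j ^ m j :=
          tsum_congr hcomp
      _ = (∏ j, x j ^ omegaPad n j) * ∏ j, (1 - x j)⁻¹ := by
          rw [tsum_mul_left, hD.2]

/-- Laplace transform of the state probabilities of SDTFPP-II. -/
theorem sdtfppII_laplace_transform (lam : ℝ) (hlam : 0 < lam)
    (β : ℕ → ℝ) (hβ : ∀ m, 0 < β m ∧ β m ≤ 1)
    (n : ℕ) (s : ℝ) (hs : 0 < s) (hsk : ∀ k ≤ n, lam < s ^ β k) :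
    ∫ t in Set.Ioi (0:ℝ), qII lam β n t * Real.exp (-(s * t))
      = lam ^ n * s ^ (β n - 1) / ∏ k ∈ Finset.range (n + 1), (s ^ β k + lam) := by
  classical
  -- notation
  set μ : (Fin (n+1) → ℕ) → ℝ := fun κ => ∑ j, (κ j : ℝ) * β j.val with hμdef
  set f : ℕ → ℝ → ℝ := fun k t =>
    (-lam) ^ k * (∑ κ ∈ Omega n k, t ^ μ κ / Real.Gamma (1 + μ κ)) * Real.exp (-(s * t))
    with hfdef
  have hμ0 : ∀ κ, 0 ≤ μ κ := by
    intro κ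
    exact Finset.sum_nonneg fun j _ => mul_nonneg (Nat.cast_nonneg _) (hβ j.val).1.le
  have hΓpos : ∀ κ, 0 < Real.Gamma (1 + μ κ) := fun κ =>
    Real.Gamma_pos_of_pos (by have := hμ0 κ; linarith)
  have h1s : (0:ℝ) < 1/s := by positivity
  -- step 1: pointwise identity
  have hq : ∀ t : ℝ, qII lam β n t * Real.exp (-(s * t)) = (-1:ℝ)^n * ∑' k, f k t := by
    intro t
    unfold qII
    rw [mul_assoc, ← tsum_mul_right]
  -- rearrangement of each term as a finite sum of integrable pieces
  have hre : ∀ (c : ℝ) (k : ℕ) (t : ℝ),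
      c * (∑ κ ∈ Omega n k, t ^ μ κ / Real.Gamma (1 + μ κ)) * Real.exp (-(s * t))
        = ∑ κ ∈ Omega n k, (c / Real.Gamma (1 + μ κ)) * (t ^ μ κ * Real.exp (-(s * t))) := by
    intro c k t
    rw [Finset.mul_sum, Finset.sum_mul]
    exact Finset.sum_congr rfl fun κ _ => by ring
  -- basic integrability and Gamma integral values
  have hbase : ∀ c : ℝ, 0 ≤ c →
      IntegrableOn (fun t : ℝ => t ^ c * Real.exp (-(s * t))) (Ioi 0) := by
    intro c hc
    have h := integrableOn_rpow_mul_exp_neg_mul_rpow (by linarith : (-1:ℝ) < c) (by norm_num : (0:ℝ) < 1) hs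
    simpa [Real.rpow_one, neg_mul] using h
  have hgamma : ∀ c : ℝ, 0 ≤ c →
      ∫ t in Ioi (0:ℝ), t ^ c * Real.exp (-(s * t))
        = (1/s) ^ (c+1) * Real.Gamma (c+1) := by
    intro c hc
    have h := Real.integral_rpow_mul_exp_neg_mul_Ioi (by linarith : (0:ℝ) < c + 1) hs
    simpa using h
  -- integrability of each f k
  have hint : ∀ k, IntegrableOn (f k) (Ioi 0) := by
    intro k
    have hfk : f k = fun t => ∑ κ ∈ Omega n k,
        ((-lam)^k / Real.Gamma (1 + μ κ)) * (t ^ μ κ * Real.exp (-(s * t))) :=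
      funext fun t => hre _ k t
    rw [hfk]
    exact integrable_finset_sum _ fun κ _ => ((hbase (μ κ) (hμ0 κ)).const_mul _)
  -- value of the integral of c * (sum) * exp
  have hval : ∀ (c : ℝ) (k : ℕ),
      ∫ t in Ioi (0:ℝ),
        c * (∑ κ ∈ Omega n k, t ^ μ κ / Real.Gamma (1 + μ κ)) * Real.exp (-(s * t))
        = ∑ κ ∈ Omega n k, c * (1/s) ^ (μ κ + 1) := by
    intro c k
    have hfk : (fun t : ℝ =>
        c * (∑ κ ∈ Omega n k, t ^ μ κ / Real.Gamma (1 + μ κ)) * Real.exp (-(s * t)))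
        = fun t => ∑ κ ∈ Omega n k,
          (c / Real.Gamma (1 + μ κ)) * (t ^ μ κ * Real.exp (-(s * t))) :=
      funext fun t => hre c k t
    rw [hfk, integral_finset_sum _ fun κ _ => ((hbase (μ κ) (hμ0 κ)).const_mul _)]
    refine Finset.sum_congr rfl fun κ _ => ?_
    rw [integral_const_mul, hgamma (μ κ) (hμ0 κ)]
    have hG : Real.Gamma (1 + μ κ) ≠ 0 := (hΓpos κ).ne'
    rw [add_comm 1 (μ κ)] at hG ⊢
    field_simp
  -- the key per-tuple rewriting
  have hkey : ∀ (L : ℝ) (k : ℕ) (κ : Fin (n+1) → ℕ), κ ∈ Omega n k →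
      L ^ k * (1/s) ^ (μ κ + 1) = (1/s) * ∏ j, (L * (1/s) ^ (β j.val)) ^ (κ j) := by
    intro L k κ hκ
    obtain ⟨hsumκ, -⟩ := mem_Omega.mp hκ
    have h2 : ∏ j, (L * (1/s) ^ (β j.val)) ^ (κ j) = L ^ k * (1/s) ^ (μ κ) := by
      simp_rw [mul_pow]
      rw [Finset.prod_mul_distrib, Finset.prod_pow_eq_pow_sum, hsumκ]
      congr 1
      have hμ' : μ κ = ∑ j, β j.val * (κ j : ℝ) :=
        Finset.sum_congr rfl fun j _ => mul_comm _ _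
      rw [hμ', Real.rpow_sum_of_pos h1s]
      refine Finset.prod_congr rfl fun j _ => ?_
      rw [← Real.rpow_natCast ((1/s) ^ (β j.val)) (κ j), ← Real.rpow_mul h1s.le]
    rw [h2, Real.rpow_add h1s, Real.rpow_one]
    ring
  -- the two geometric families
  set y : Fin (n+1) → ℝ := fun j => lam * (1/s) ^ (β j.val) with hydef
  set x : Fin (n+1) → ℝ := fun j => (-lam) * (1/s) ^ (β j.val) with hxdef
  have hw : ∀ i : ℕ, (1/s : ℝ) ^ (β i) = (s ^ β i)⁻¹ := by
    intro i
    rw [one_div, ← Real.inv_rpow hs.le]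
  have hy : ∀ j, |y j| < 1 := by
    intro j
    have hj : j.val ≤ n := by omega
    have hz : (0:ℝ) < s ^ β j.val := Real.rpow_pos_of_pos hs _
    rw [hydef]
    simp only
    rw [abs_of_pos (by positivity), hw, ← div_eq_mul_inv, div_lt_one hz]
    exact hsk j.val hj
  have hx : ∀ j, |x j| < 1 := by
    intro j
    have : |x j| = |y j| := by
      rw [hxdef, hydef]; simp only [neg_mul, abs_neg]
    rw [this]; exact hy j
  -- measurability
  have hmeas : ∀ k, AEStronglyMeasurable (f k) (volume.restrict (Ioi 0)) := by
    intro k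
    refine Measurable.aestronglyMeasurable ?_
    exact (measurable_const.mul (Finset.measurable_sum _ fun κ _ =>
      (measurable_id'.pow_const (μ κ)).div_const _)).mul
      ((measurable_id'.const_mul s).neg.exp)
  -- norm identity on Ioi 0
  have hnorm : ∀ k, ∀ t ∈ Ioi (0:ℝ), ‖f k t‖
      = lam ^ k * (∑ κ ∈ Omega n k, t ^ μ κ / Real.Gamma (1 + μ κ)) * Real.exp (-(s * t)) := by
    intro k t ht
    have hS : 0 ≤ ∑ κ ∈ Omega n k, t ^ μ κ / Real.Gamma (1 + μ κ) :=
      Finset.sum_nonneg fun κ _ =>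
        div_nonneg (Real.rpow_pos_of_pos ht _).le (hΓpos κ).le
    rw [hfdef]
    simp only
    rw [Real.norm_eq_abs, abs_mul, abs_mul, abs_pow, abs_neg, abs_of_pos hlam,
      abs_of_nonneg hS, abs_of_pos (Real.exp_pos _)]
  -- the nonnegative bounding sequence
  set a : ℕ → ℝ := fun k => ∑ κ ∈ Omega n k, lam ^ k * (1/s) ^ (μ κ + 1) with hadef
  have ha_eq : ∀ k, a k = (1/s) * ∑ κ ∈ Omega n k, ∏ j, y j ^ κ j := by
    intro k
    rw [hadef]
    simp only
    rw [Finset.mul_sum]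
    exact Finset.sum_congr rfl fun κ hκ => hkey lam k κ hκ
  have ha_nonneg : ∀ k, 0 ≤ a k := by
    intro k
    refine Finset.sum_nonneg fun κ _ => mul_nonneg (by positivity) ?_
    exact Real.rpow_nonneg h1s.le _
  have ha_sum : Summable a := by
    have := ((omega_series n y hy).1).mul_left (1/s)
    exact this.congr fun k => (ha_eq k).symm
  -- the lintegral bound
  have hlint_eq : ∀ k, ∫⁻ t in Ioi (0:ℝ), ‖f k t‖ₑ = ENNReal.ofReal (a k) := by
    intro k
    rw [← ofReal_integral_norm_eq_lintegral_enorm (hint k)]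
    congr 1
    rw [setIntegral_congr_fun measurableSet_Ioi (hnorm k), hval (lam ^ k) k]
  have hlint : ∑' k, ∫⁻ t in Ioi (0:ℝ), ‖f k t‖ₑ ≠ ⊤ := by
    rw [tsum_congr hlint_eq, ← ENNReal.ofReal_tsum_of_nonneg ha_nonneg ha_sum]
    exact ENNReal.ofReal_ne_top
  -- interchange integral and sum
  have hswap : ∫ t in Ioi (0:ℝ), qII lam β n t * Real.exp (-(s * t))
      = (-1:ℝ)^n * ∑' k, ∫ t in Ioi (0:ℝ), f k t := by
    rw [integral_congr_ae (Filter.Eventually.of_forall fun t => hq t),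
      integral_const_mul, integral_tsum hmeas hlint]
  -- evaluate each integral
  have hintval : ∀ k, ∫ t in Ioi (0:ℝ), f k t
      = (1/s) * ∑ κ ∈ Omega n k, ∏ j, x j ^ κ j := by
    intro k
    have : ∫ t in Ioi (0:ℝ), f k t = ∑ κ ∈ Omega n k, (-lam)^k * (1/s) ^ (μ κ + 1) := by
      rw [hfdef]
      exact hval ((-lam)^k) k
    rw [this, Finset.mul_sum]
    exact Finset.sum_congr rfl fun κ hκ => hkey (-lam) k κ hκ
  rw [hswap, tsum_congr hintval, tsum_mul_left, (omega_series n x hx).2]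
  -- final algebra
  set z : ℕ → ℝ := fun i => s ^ β i with hzdef
  have hzpos : ∀ i, 0 < z i := fun i => Real.rpow_pos_of_pos hs _
  have hP1 : (∏ j : Fin (n+1), x j ^ omegaPad n j)
      = (-1:ℝ)^n * (lam^n * (∏ i ∈ Finset.range n, z i)⁻¹) := by
    have hxz : ∀ j : Fin (n+1), x j ^ omegaPad n j
        = (if j.val < n then -(lam * (z j.val)⁻¹) else 1) := by
      intro j
      rw [hxdef]
      simp only [omegaPad]
      by_cases hj : j.val < n
      · rw [if_pos hj, if_pos hj, pow_one, hw, neg_mul]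
      · rw [if_neg hj, if_neg hj, pow_zero]
    rw [Finset.prod_congr rfl fun j _ => hxz j]
    rw [Fin.prod_univ_eq_prod_range (fun i => if i < n then -(lam * (z i)⁻¹) else 1) (n+1)]
    rw [Finset.prod_range_succ, if_neg (lt_irrefl n), mul_one]
    rw [Finset.prod_congr rfl (fun i hi => if_pos (Finset.mem_range.mp hi))]
    have : ∀ i ∈ Finset.range n, -(lam * (z i)⁻¹) = (-1) * (lam * (z i)⁻¹) := by
      intro i _; ring
    rw [Finset.prod_congr rfl this, Finset.prod_mul_distrib, Finset.prod_const,
      Finset.card_range, Finset.prod_mul_distrib, Finset.prod_const, Finset.card_range,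
      ← Finset.prod_inv_distrib]
  have hP2 : (∏ j : Fin (n+1), (1 - x j)⁻¹)
      = (∏ i ∈ Finset.range (n+1), z i) * (∏ i ∈ Finset.range (n+1), (z i + lam))⁻¹ := by
    have hxz : ∀ j : Fin (n+1), (1 - x j)⁻¹ = z j.val * (z j.val + lam)⁻¹ := by
      intro j
      rw [hxdef]
      simp only
      rw [hw, neg_mul, sub_neg_eq_add]
      have hz := hzpos j.val
      have h1 : 1 + lam * (z j.val)⁻¹ = (z j.val + lam) * (z j.val)⁻¹ := by
        field_simp
      rw [h1, mul_inv, inv_inv, mul_comm]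
    rw [Finset.prod_congr rfl fun j _ => hxz j]
    rw [Fin.prod_univ_eq_prod_range (fun i => z i * (z i + lam)⁻¹) (n+1)]
    rw [Finset.prod_mul_distrib, ← Finset.prod_inv_distrib]
  rw [hP1, hP2]
  have hA : (∏ i ∈ Finset.range n, z i) ≠ 0 :=
    Finset.prod_ne_zero_iff.mpr fun i _ => (hzpos i).ne'
  have hB : (∏ i ∈ Finset.range (n+1), (z i + lam)) ≠ 0 :=
    Finset.prod_ne_zero_iff.mpr fun i _ => (by have := hzpos i; positivity)
  have hzn : s ^ (β n - 1) = z n / s := by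
    rw [hzdef]
    simp only
    rw [Real.rpow_sub hs, Real.rpow_one]
  have hrange : ∏ k ∈ Finset.range (n + 1), (s ^ β k + lam)
      = ∏ i ∈ Finset.range (n+1), (z i + lam) := rfl
  rw [hzn, hrange, Finset.prod_range_succ (f := z)]
  have hneg : (-1:ℝ)^n * (-1:ℝ)^n = 1 := by
    rw [← pow_add]
    exact Even.neg_one_pow ⟨n, rfl⟩
  have hcalc : (-1:ℝ)^n * (1/s * ((-1:ℝ)^n * (lam^n * (∏ i ∈ Finset.range n, z i)⁻¹) *
      ((∏ i ∈ Finset.range n, z i) * z n * (∏ i ∈ Finset.range (n+1), (z i + lam))⁻¹)))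
      = ((-1:ℝ)^n * (-1:ℝ)^n) * ((1/s) * lam^n * z n *
        ((∏ i ∈ Finset.range n, z i)⁻¹ * (∏ i ∈ Finset.range n, z i)) *
        (∏ i ∈ Finset.range (n+1), (z i + lam))⁻¹) := by ring
  rw [hcalc, hneg, inv_mul_cancel₀ hA]
  ring
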